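/- T(2) = {1}, and T(m) is empty for every integer m > 2 with m ≢ 1 mod 3. -/
import Mathlib


/-- The set of natural numbers generated by `A` under addition (containing `0`). -/
def NSgen (A : Set ℕ) : Set ℕ := (AddSubmonoid.closure A : Set ℕ)

/-- `S` is a numerical semigroup: additively closed, contains `0`,
has finite complement in `ℕ`, and `S ≠ ℕ`. -/
def IsNumSgrp (S : Set ℕ) : Prop :=
  0 ∈ S ∧ (∀ a ∈ S, ∀ b ∈ S, a + b ∈ S) ∧ Sᶜ.Finite ∧ S ≠ Set.univ

/-- The Frobenius number: the largest natural number not in `S`. -/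
noncomputable def NSfrob (S : Set ℕ) : ℕ := sSup Sᶜ

/-- The genus: the number of gaps of `S`. -/
noncomputable def NSgenus (S : Set ℕ) : ℕ := Sᶜ.ncard

/-- The multiplicity: the least positive element of `S`. -/
noncomputable def NSmult (S : Set ℕ) : ℕ := sInf {n | n ∈ S ∧ n ≠ 0}

/-- The atoms (minimal generators) of `S`: the set `S* \ (S* + S*)` where `S* = S \ {0}`. -/
def NSatoms (S : Set ℕ) : Set ℕ :=
  {n | n ∈ S ∧ n ≠ 0 ∧ ¬ ∃ a, a ∈ S ∧ a ≠ 0 ∧ ∃ b, b ∈ S ∧ b ≠ 0 ∧ n = a + b}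

/-- The embedding dimension: the number of atoms of `S`. -/
noncomputable def NSembdim (S : Set ℕ) : ℕ := (NSatoms S).ncard

/-- The primes in the interval `I_lam(p) = [p, p + lam*p]`. -/
def primesIn (lam : ℝ) (p : ℕ) : Set ℕ :=
  {q | q.Prime ∧ p ≤ q ∧ (q : ℝ) ≤ p + lam * p}

/-- `S_lam(p)`: the numerical semigroup generated by the primes in `[p, p + lam*p]`. -/
def Slam (lam : ℝ) (p : ℕ) : Set ℕ := NSgen (primesIn lam p)

/-- `D_lam`: the primes `p` such that `[p, p + lam*p]` contains at least two primes. -/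
def Dlam (lam : ℝ) : Set ℕ :=
  {p | p.Prime ∧ ∃ q ∈ primesIn lam p, ∃ r ∈ primesIn lam p, q ≠ r}

/-- `f_lam(p)`: the Frobenius number of `S_lam(p)`. -/
noncomputable def flam (lam : ℝ) (p : ℕ) : ℕ := NSfrob (Slam lam p)

/-- `p_n`, the `n`-th prime in natural order (`nthPrime 1 = 2`). -/
noncomputable def nthPrime (n : ℕ) : ℕ := Nat.nth Nat.Prime (n - 1)

/-- `S_n`: the numerical semigroup generated by all primes `≥ p_n`. -/
noncomputable def Sn (n : ℕ) : Set ℕ := NSgen {q | q.Prime ∧ nthPrime n ≤ q}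

/-- `f_n`: the Frobenius number of `S_n`. -/
noncomputable def fn (n : ℕ) : ℕ := NSfrob (Sn n)

/-- `S(p)`: the numerical semigroup generated by the primes in `[p, 2p]`. -/
def Sp (p : ℕ) : Set ℕ := NSgen {q | q.Prime ∧ p ≤ q ∧ q ≤ 2 * p}

/-- Statement `A(m)`: large `N` of the same parity as `m` are sums of `m` almost equal primes. -/
def Astmt (m : ℕ) : Prop :=
  ∀ δ : ℝ, 0 < δ → ∃ N₀ : ℕ, 0 < N₀ ∧ ∀ N : ℕ, N₀ ≤ N → N % 2 = m % 2 →
    ∃ q : Fin m → ℕ, (∀ i, (q i).Prime) ∧ (∑ i, q i) = N ∧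
      ∀ i, |(N : ℝ) / m - q i| < δ * N

/-- `T(m)`: positive integers `t` such that `1+tm`, `3+tm` and `1+t(m+2)` are all prime. -/
def Tset (m : ℕ) : Set ℕ :=
  {t | 0 < t ∧ (1 + t * m).Prime ∧ (3 + t * m).Prime ∧ (1 + t * (m + 2)).Prime}

theorem statement14 :
    Tset 2 = {1} ∧ ∀ m : ℕ, 2 < m → m % 3 ≠ 1 → Tset m = ∅ := by
  have key : ∀ n : ℕ, n.Prime → 3 ∣ n → n = 3 := fun n hp h =>
    ((Nat.prime_dvd_prime_iff_eq Nat.prime_three hp).mp h).symm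
  constructor
  · ext t
    simp only [Tset, Set.mem_setOf_eq, Set.mem_singleton_iff]
    constructor
    · rintro ⟨ht, h1, h3, h5⟩
      obtain ⟨k, hk | hk | hk⟩ : ∃ k, t = 3*k ∨ t = 3*k+1 ∨ t = 3*k+2 := ⟨t/3, by omega⟩
      · have := key _ h3 ⟨1 + 2*k, by subst hk; ring⟩
        omega
      · have := key _ h1 ⟨1 + 2*k, by subst hk; ring⟩
        omega
      · have := key _ h5 ⟨3 + 4*k, by subst hk; ring⟩
        omega
    · rintro rfl
      exact ⟨one_pos, by norm_num, by norm_num, by norm_num⟩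
  · intro m hm hmod
    ext t
    simp only [Tset, Set.mem_setOf_eq, Set.mem_empty_iff_false, iff_false]
    rintro ⟨ht, h1, h3, h5⟩
    obtain ⟨j, hj | hj⟩ : ∃ j, m = 3*j ∨ m = 3*j+2 := ⟨m/3, by omega⟩
    · have h := key _ h3 ⟨1 + t*j, by subst hj; ring⟩
      have h0 : t * m = 0 := by linarith
      rcases Nat.mul_eq_zero.mp h0 with h' | h' <;> omega
    · obtain ⟨k, hk | hk | hk⟩ : ∃ k, t = 3*k ∨ t = 3*k+1 ∨ t = 3*k+2 := ⟨t/3, by omega⟩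
      · have h := key _ h3 ⟨1 + k*m, by subst hk; ring⟩
        have h0 : t * m = 0 := by linarith
        rcases Nat.mul_eq_zero.mp h0 with h' | h' <;> omega
      · have h := key _ h1 ⟨1 + j + 3*k*j + 2*k, by subst hj; subst hk; ring⟩
        have h5' : 5 ≤ m := by omega
        have hle : m ≤ t * m := Nat.le_mul_of_pos_left m ht
        linarith
      · have h := key _ h5 ⟨3 + 3*k*j + 4*k + 2*j, by subst hj; subst hk; ring⟩
        have h2 : 2 ≤ t := by omega
        have hle : 2 * (m+2) ≤ t * (m+2) := Nat.mul_le_mul_right _ h2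
        linarith
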